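/- For every nonnegative integer t divisible by 3, the number of 3×3 matrices with nonnegative integer entries whose row sums, column sums, and both main diagonal sums all equal t, is nonzero; moreover for t not divisible by 3 this count with both diagonal conditions imposed and the formula (2/9)t² + (2/3)t + 1 need not agree, i.e., the formula is asserted only when 3 | t, in which case the count equals (2t² + 6t + 9)/9. -/
import Mathlib

def mk3 (c x y : ℕ) : Matrix (Fin 3) (Fin 3) ℕ :=
  !![x, 3*c-x-y, y; y+c-x, c, x+c-y; 2*c-y, x+y-c, 2*c-x]

def Tc (c : ℕ) : Finset (ℕ × ℕ) :=
  (Finset.range (2*c+1) ×ˢ Finset.range (2*c+1)).filter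
    (fun p => c ≤ p.1 + p.2 ∧ p.1 + p.2 ≤ 3*c ∧ p.1 ≤ p.2 + c ∧ p.2 ≤ p.1 + c)

lemma sum_odds (n : ℕ) : ∑ x ∈ Finset.range n, (2*x+1) = n^2 := by
  induction n with
  | zero => simp
  | succ n ih => rw [Finset.sum_range_succ, ih]; ring

lemma Tc_card (c : ℕ) : (Tc c).card = 2*c^2 + 2*c + 1 := by
  have key : (Tc c).card
      = ∑ x ∈ Finset.range (2*c+1),
          (Finset.Icc (max (c-x) (x-c)) (min (x+c) (3*c-x))).card := by
    rw [Tc, Finset.card_filter, Finset.sum_product]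
    refine Finset.sum_congr rfl fun x hx => ?_
    rw [← Finset.card_filter]
    congr 1
    ext y
    simp only [Finset.mem_filter, Finset.mem_range, Finset.mem_Icc,
      le_min_iff, max_le_iff]
    omega
  rw [key]
  have hsplit : Finset.range (2*c+1) = Finset.Ico 0 c ∪ Finset.Ico c (2*c+1) := by
    rw [Finset.Ico_union_Ico_eq_Ico (by omega) (by omega), Finset.range_eq_Ico]
  rw [hsplit, Finset.sum_union (by simp [Finset.disjoint_left]; omega)]
  have h1 : ∑ x ∈ Finset.Ico 0 c,
      (Finset.Icc (max (c-x) (x-c)) (min (x+c) (3*c-x))).card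
      = ∑ x ∈ Finset.range c, (2*x+1) := by
    rw [Finset.range_eq_Ico]
    refine Finset.sum_congr rfl fun x hx => ?_
    simp only [Finset.mem_Ico] at hx
    rw [Nat.card_Icc]; omega
  have h2 : ∑ x ∈ Finset.Ico c (2*c+1),
      (Finset.Icc (max (c-x) (x-c)) (min (x+c) (3*c-x))).card
      = ∑ k ∈ Finset.range (c+1), (2*(c-k)+1) := by
    rw [Finset.sum_Ico_eq_sum_range]
    have : 2*c+1-c = c+1 := by omega
    rw [this]
    refine Finset.sum_congr rfl fun k hk => ?_
    simp only [Finset.mem_range] at hk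
    rw [Nat.card_Icc]; omega
  have h3 : ∑ k ∈ Finset.range (c+1), (2*(c-k)+1)
      = ∑ j ∈ Finset.range (c+1), (2*j+1) := by
    rw [← Finset.sum_range_reflect]
    refine Finset.sum_congr rfl fun j hj => ?_
    simp only [Finset.mem_range] at hj
    omega
  rw [h1, h2, h3, sum_odds, sum_odds]
  ring

lemma setEq (c : ℕ) :
    {M : Matrix (Fin 3) (Fin 3) ℕ |
      (∀ i, ∑ j, M i j = 3*c) ∧ (∀ j, ∑ i, M i j = 3*c) ∧
      M 0 0 + M 1 1 + M 2 2 = 3*c ∧ M 0 2 + M 1 1 + M 2 0 = 3*c}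
    = (fun p : ℕ × ℕ => mk3 c p.1 p.2) '' ↑(Tc c) := by
  ext M
  simp only [Set.mem_setOf_eq, Set.mem_image, Tc, Finset.coe_filter, Finset.mem_coe,
    Finset.mem_filter, Finset.mem_product, Finset.mem_range]
  constructor
  · rintro ⟨hr, hc, hd, ha⟩
    have hr0 := hr 0; have hr1 := hr 1; have hr2 := hr 2
    have hc0 := hc 0; have hc1 := hc 1; have hc2 := hc 2
    simp [Fin.sum_univ_three] at hr0 hr1 hr2 hc0 hc1 hc2
    refine ⟨(M 0 0, M 0 2), ⟨⟨?_, ?_⟩, ?_, ?_, ?_, ?_⟩, ?_⟩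
    · omega
    · omega
    · omega
    · omega
    · omega
    · omega
    · ext i j
      fin_cases i <;> fin_cases j <;> simp [mk3] <;> omega
  · rintro ⟨⟨x, y⟩, ⟨⟨hx, hy⟩, h1, h2, h3, h4⟩, rfl⟩
    refine ⟨?_, ?_, ?_, ?_⟩
    · intro i; fin_cases i <;> simp [mk3, Fin.sum_univ_three] <;> omega
    · intro j; fin_cases j <;> simp [mk3, Fin.sum_univ_three] <;> omega
    · simp [mk3]; omega
    · simp [mk3]; omega

/-- The number of 3×3 matrices with nonnegative integer entries whose row sums,
column sums, and both main diagonal sums all equal `t`. -/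
noncomputable def magicWithRepeats3 (t : ℕ) : ℕ :=
  Set.ncard {M : Matrix (Fin 3) (Fin 3) ℕ |
    (∀ i, ∑ j, M i j = t) ∧ (∀ j, ∑ i, M i j = t) ∧
    M 0 0 + M 1 1 + M 2 2 = t ∧ M 0 2 + M 1 1 + M 2 0 = t}

lemma magic_count (c : ℕ) : magicWithRepeats3 (3*c) = 2*c^2 + 2*c + 1 := by
  rw [magicWithRepeats3, setEq c,
    Set.ncard_image_of_injOn, Set.ncard_coe_finset, Tc_card]
  intro p _ q _ h
  simp only at h
  have h1 : mk3 c p.1 p.2 0 0 = mk3 c q.1 q.2 0 0 := by rw [h]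
  have h2 : mk3 c p.1 p.2 0 2 = mk3 c q.1 q.2 0 2 := by rw [h]
  simp [mk3] at h1 h2
  exact Prod.ext h1 h2

lemma magic_one : magicWithRepeats3 1 = 0 := by
  rw [magicWithRepeats3]
  convert Set.ncard_empty (Matrix (Fin 3) (Fin 3) ℕ) using 2
  ext M
  simp only [Set.mem_setOf_eq, Set.mem_empty_iff_false, iff_false, not_and]
  intro hr hc hd ha
  have hr0 := hr 0; have hr1 := hr 1; have hr2 := hr 2
  have hc0 := hc 0; have hc1 := hc 1; have hc2 := hc 2
  simp [Fin.sum_univ_three] at hr0 hr1 hr2 hc0 hc1 hc2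
  omega

theorem macmahon_magic_3x3_dvd_three :
    (∀ t : ℕ, 3 ∣ t → magicWithRepeats3 t ≠ 0 ∧
      (magicWithRepeats3 t : ℚ) = (2 * (t : ℚ) ^ 2 + 6 * (t : ℚ) + 9) / 9) ∧
    ∃ t : ℕ, ¬ (3 ∣ t) ∧
      (magicWithRepeats3 t : ℚ) ≠ (2 * (t : ℚ) ^ 2 + 6 * (t : ℚ) + 9) / 9 := by
  constructor
  · rintro t ⟨c, rfl⟩
    rw [magic_count c]
    constructor
    · positivity
    · push_cast
      field_simp
      ring
  · refine ⟨1, by norm_num, ?_⟩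
    rw [magic_one]
    norm_num
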